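/- For c > 0, the function y ↦ arctan(y)·c + λ·y/(1+y²) (λ real) evaluated along the constraint equation arctan(y)·c = -λ·y/(1+y²) with y = e^{a} yields: a > 0 iff λ < -(π/2)c, a = 0 iff λ = -(π/2)c, and a < 0 iff -(π/2)c < λ < -c, where a is the unique solution parameter. -/

import Mathlib

open Real

private lemma arctan_le_self' {x : ℝ} (hx : 0 ≤ x) : arctan x ≤ x := by
  rcases eq_or_lt_of_le hx with h | h
  · simp [← h]
  · have h1 : 0 < arctan x := by simpa using arctan_strictMono h
    have h2 : arctan x < π / 2 := arctan_lt_pi_div_two x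
    have := Real.lt_tan h1 h2
    rw [tan_arctan] at this
    exact this.le

private lemma Fmono : StrictMonoOn (fun y : ℝ => (1/y + y) * arctan y) (Set.Ioi 0) := by
  have hderiv : ∀ x ∈ Set.Ioi (0:ℝ), HasDerivAt (fun y : ℝ => (1/y + y) * arctan y)
      ((-(1/x^2) + 1) * arctan x + (1/x + x) * (1/(1+x^2))) x := by
    intro x hx
    have hx0 : (x:ℝ) ≠ 0 := ne_of_gt hx
    have h1 : HasDerivAt (fun y : ℝ => 1/y + y) (-(1/x^2) + 1) x := by
      simpa [one_div, Pi.add_def] using ((hasDerivAt_inv hx0).add (hasDerivAt_id x))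
    exact h1.mul (hasDerivAt_arctan x)
  have hpos : ∀ x ∈ Set.Ioi (0:ℝ),
      0 < (-(1/x^2) + 1) * arctan x + (1/x + x) * (1/(1+x^2)) := by
    intro x hx
    simp only [Set.mem_Ioi] at hx
    have hx2 : (0:ℝ) < 1 + x^2 := by positivity
    have key : (1/x + x) * (1/(1+x^2)) = 1/x := by
      field_simp
    rw [key]
    rcases le_or_gt 1 x with h1 | h1
    · have : 0 ≤ (-(1/x^2) + 1) := by
        have : 1/x^2 ≤ 1 := by
          rw [div_le_one (by positivity)]
          nlinarith
        linarith
      have := mul_nonneg this (by simpa using arctan_strictMono.monotone (by linarith : (0:ℝ) ≤ x) : (0:ℝ) ≤ arctan x)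
      have h0 : 0 < 1/x := by positivity
      linarith
    · have ha : arctan x ≤ x := arctan_le_self' hx.le
      have hc : (0:ℝ) ≤ 1/x^2 - 1 := by
        have : (1:ℝ) ≤ 1/x^2 := by
          rw [le_div_iff₀ (by positivity)]
          nlinarith
        linarith
      have haa : 0 ≤ arctan x := by simpa using arctan_strictMono.monotone hx.le
      have : (1/x^2 - 1) * arctan x ≤ (1/x^2 - 1) * x := by
        exact mul_le_mul_of_nonneg_left ha hc
      have hxx : (1/x^2 - 1) * x = 1/x - x := by field_simp
      nlinarith
  have hcont : ContinuousOn (fun y : ℝ => (1/y + y) * arctan y) (Set.Ioi 0) := by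
    apply ContinuousOn.mul
    · exact (continuousOn_const.div continuousOn_id (fun x hx => ne_of_gt hx)).add
        continuousOn_id
    · exact Real.continuous_arctan.continuousOn
  apply StrictMonoOn.mono (s := Set.Ioi 0)
  · exact strictMonoOn_of_hasDerivWithinAt_pos (convex_Ioi 0) hcont
      (fun x hx => ((hderiv x (interior_subset hx)).hasDerivWithinAt))
      (fun x hx => hpos x (by rwa [interior_Ioi] at hx))
  · exact le_refl _

theorem stmt_19 (c lam : ℝ) (hc : 0 < c) (hlam : lam < -c) (a : ℝ)
    (ha : c * arctan (exp a) = -lam * exp a / (1 + exp a ^ 2)) :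
    (0 < a ↔ lam < -(π / 2) * c) ∧
    (a = 0 ↔ lam = -(π / 2) * c) ∧
    (a < 0 ↔ (-(π / 2) * c < lam ∧ lam < -c)) := by
  set y := exp a with hy
  have hy0 : 0 < y := exp_pos a
  have hy2 : (0:ℝ) < 1 + y^2 := by positivity
  have hF : c * ((1/y + y) * arctan y) = -lam := by
    have h0 : (1/y + y) * (c * arctan y) = (1/y + y) * (-lam * y / (1 + y^2)) := by rw [ha]
    have h2 : (1/y + y) * (-lam * y / (1 + y^2)) = -lam := by
      field_simp
    rw [h2] at h0
    linarith [h0]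
  have hF1 : (1/(1:ℝ) + 1) * arctan 1 = π / 2 := by
    rw [arctan_one]; ring
  have hmem1 : (1:ℝ) ∈ Set.Ioi (0:ℝ) := by norm_num
  have hmemy : y ∈ Set.Ioi (0:ℝ) := hy0
  have key1 : 0 < a → lam < -(π/2) * c := by
    intro h
    have h1 : 1 < y := by rw [hy]; simpa using exp_lt_exp.2 h
    have h2 := Fmono hmem1 hmemy h1
    simp only [] at h2
    rw [hF1] at h2
    have h3 : c * (π/2) < c * ((1/y + y) * arctan y) := mul_lt_mul_of_pos_left h2 hc
    rw [hF] at h3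
    nlinarith
  have key2 : a = 0 → lam = -(π/2) * c := by
    intro h
    rw [h] at hy
    simp only [exp_zero] at hy
    rw [hy, hF1] at hF
    linarith
  have key3 : a < 0 → -(π/2) * c < lam := by
    intro h
    have h1 : y < 1 := by rw [hy]; simpa using exp_lt_exp.2 h
    have h2 := Fmono hmemy hmem1 h1
    simp only [] at h2
    rw [hF1] at h2
    have h3 : c * ((1/y + y) * arctan y) < c * (π/2) := mul_lt_mul_of_pos_left h2 hc
    rw [hF] at h3
    nlinarith
  rcases lt_trichotomy a 0 with h | h | h
  · have := key3 h
    refine ⟨⟨fun h' => absurd h' (by linarith), fun h' => absurd h' (by linarith)⟩,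
      ⟨fun h' => absurd h' (by linarith), fun h' => absurd (key3 h) (by linarith)⟩,
      fun _ => ⟨this, hlam⟩, fun _ => h⟩
  · have := key2 h
    refine ⟨⟨fun h' => absurd h' (by linarith), fun h' => absurd h' (by linarith)⟩,
      ⟨fun _ => this, fun _ => h⟩,
      ⟨fun h' => absurd h' (by linarith), fun h' => absurd h'.1 (by linarith)⟩⟩
  · have := key1 h
    refine ⟨⟨fun _ => this, fun _ => h⟩,
      ⟨fun h' => absurd h' (by linarith), fun h' => absurd h' (by linarith)⟩,
      ⟨fun h' => absurd h' (by linarith), fun h' => absurd h'.1 (by linarith)⟩⟩
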